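/- Let A = Σ_i a_i P_i and B = Σ_i b_i P_i be two matrices diagonal in the same orthogonal projector decomposition Σ_i P_i = I, with complex coefficients a_i, b_i. Then for any unitary W, |Tr[A† W B W†]| ≤ max_π |Σ_i ā_{π(i)} b_i|, where the maximum is over permutations π. -/

import Mathlib

open Matrix

lemma trace_mul_conjTranspose_self_eq {n : ℕ} (X : Matrix (Fin n) (Fin n) ℂ) :
    (X * Xᴴ).trace = ((∑ k, ∑ l, Complex.normSq (X k l) : ℝ) : ℂ) := by
  push_cast
  simp [trace, mul_apply, conjTranspose_apply, Matrix.diag, Complex.mul_conj]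

/-- Let `A = Σ_i a_i P_i` and `B = Σ_i b_i P_i` be diagonal in the same (rank-one)
orthogonal projector decomposition `Σ_i P_i = 1`. Then for any unitary `W`,
`|Tr[Aᴴ W B Wᴴ]| ≤ max_π |Σ_i conj (a (π i)) * b i|`, the maximum over permutations. -/
theorem stmt_7 (N m : ℕ) (P : Fin m → Matrix (Fin N) (Fin N) ℂ)
    (a b : Fin m → ℂ) (A B W : Matrix (Fin N) (Fin N) ℂ)
    (hHerm : ∀ i, (P i)ᴴ = P i)
    (hIdem : ∀ i, P i * P i = P i)
    (hOrth : ∀ i j, i ≠ j → P i * P j = 0)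
    (hSum : ∑ i, P i = 1)
    (hRankOne : ∀ i, (P i).trace = 1)
    (hA : A = ∑ i, a i • P i) (hB : B = ∑ i, b i • P i)
    (hW : W * Wᴴ = 1) (hW' : Wᴴ * W = 1) :
    ‖(Aᴴ * (W * B * Wᴴ)).trace‖ ≤
      Finset.univ.sup' Finset.univ_nonempty
        (fun π : Equiv.Perm (Fin m) =>
          ‖∑ i, (starRingEnd ℂ) (a (π i)) * b i‖) := by
  classical
  set T : Fin m → Fin m → ℂ := fun i j => (P i * (W * P j * Wᴴ)).trace with hTdef
  set r : Fin m → Fin m → ℝ := fun i j => ∑ k, ∑ l, Complex.normSq ((P i * W * P j) k l)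
    with hrdef
  -- T is real and nonnegative
  have hTr : ∀ i j, T i j = (r i j : ℂ) := by
    intro i j
    have h1 : (P i * W * P j)ᴴ = P j * Wᴴ * P i := by
      simp [conjTranspose_mul, hHerm, mul_assoc]
    have key : T i j = ((P i * W * P j) * (P i * W * P j)ᴴ).trace := by
      rw [hTdef]
      simp only []
      rw [h1]
      have h2 : (P i * W * P j) * (P j * Wᴴ * P i) = P i * (W * P j * Wᴴ) * P i := by
        conv_rhs => rw [← hIdem j]
        simp only [mul_assoc]
      rw [h2, trace_mul_cycle, ← mul_assoc, hIdem]
      simp only [mul_assoc]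
    rw [key, trace_mul_conjTranspose_self_eq]
  have hr0 : ∀ i j, 0 ≤ r i j := fun i j =>
    Finset.sum_nonneg fun _ _ => Finset.sum_nonneg fun _ _ => Complex.normSq_nonneg _
  -- row sums
  have hrow : ∀ i, ∑ j, T i j = 1 := by
    intro i
    have h : ∑ j, T i j = (P i * (W * (∑ j, P j) * Wᴴ)).trace := by
      rw [hTdef]
      simp only [Finset.mul_sum, Finset.sum_mul, trace_sum]
    rw [h, hSum, mul_one, hW, mul_one, hRankOne]
  have hcol : ∀ j, ∑ i, T i j = 1 := by
    intro j
    have h : ∑ i, T i j = ((∑ i, P i) * (W * P j * Wᴴ)).trace := by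
      rw [hTdef]
      simp only [Finset.sum_mul, trace_sum]
    rw [h, hSum, one_mul, trace_mul_cycle, hW', one_mul, hRankOne]
  have hrowr : ∀ i, ∑ j, r i j = 1 := by
    intro i
    have h := hrow i
    rw [Finset.sum_congr rfl fun j _ => hTr i j] at h
    exact_mod_cast h
  have hcolr : ∀ j, ∑ i, r i j = 1 := by
    intro j
    have h := hcol j
    rw [Finset.sum_congr rfl fun i _ => hTr i j] at h
    exact_mod_cast h
  -- doubly stochastic
  have hDS : (Matrix.of r) ∈ doublyStochastic ℝ (Fin m) :=
    mem_doublyStochastic_iff_sum.mpr ⟨fun i j => hr0 i j, hrowr, hcolr⟩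
  obtain ⟨w, hw0, hw1, hwM⟩ := exists_eq_sum_perm_of_mem_doublyStochastic hDS
  have hentry : ∀ i j, r i j = ∑ σ : Equiv.Perm (Fin m), w σ * (if σ i = j then 1 else 0) := by
    intro i j
    have h := congrFun (congrFun hwM i) j
    simp only [Matrix.sum_apply, Matrix.smul_apply, Equiv.Perm.permMatrix,
      PEquiv.toMatrix_apply, Equiv.toPEquiv_apply, smul_eq_mul, Matrix.of_apply,
      Option.mem_def, Option.some.injEq] at h
    rw [← h]
  have hTc : ∀ i j, T i j = ∑ σ : Equiv.Perm (Fin m),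
      (w σ : ℂ) * (if σ i = j then (1:ℂ) else 0) := by
    intro i j
    rw [hTr, hentry]
    push_cast [apply_ite]
    rfl
  -- expand the trace
  have expand : (Aᴴ * (W * B * Wᴴ)).trace
      = ∑ i, ∑ j, (starRingEnd ℂ) (a i) * b j * T i j := by
    subst hA hB
    rw [conjTranspose_sum]
    simp only [conjTranspose_smul, hHerm]
    simp only [Finset.mul_sum, Finset.sum_mul, trace_sum, smul_mul_assoc, mul_smul_comm,
      trace_smul, smul_eq_mul, Complex.star_def]
    rw [Finset.sum_comm]
    refine Finset.sum_congr rfl fun i _ => Finset.sum_congr rfl fun j _ => ?_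
    rw [hTdef]
    ring_nf
  -- rewrite with permutation decomposition
  have main : (Aᴴ * (W * B * Wᴴ)).trace
      = ∑ σ : Equiv.Perm (Fin m), (w σ : ℂ) * ∑ j, (starRingEnd ℂ) (a (σ⁻¹ j)) * b j := by
    rw [expand]
    have step1 : ∀ i : Fin m, ∑ j, (starRingEnd ℂ) (a i) * b j * T i j
        = ∑ σ : Equiv.Perm (Fin m), (w σ : ℂ) * ((starRingEnd ℂ) (a i) * b (σ i)) := by
      intro i
      calc ∑ j, (starRingEnd ℂ) (a i) * b j * T i j
          = ∑ j, ∑ σ : Equiv.Perm (Fin m),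
              (starRingEnd ℂ) (a i) * b j * ((w σ : ℂ) * if σ i = j then 1 else 0) := by
            refine Finset.sum_congr rfl fun j _ => ?_
            rw [hTc i j, Finset.mul_sum]
        _ = ∑ σ : Equiv.Perm (Fin m), ∑ j,
              (starRingEnd ℂ) (a i) * b j * ((w σ : ℂ) * if σ i = j then 1 else 0) :=
            Finset.sum_comm
        _ = ∑ σ : Equiv.Perm (Fin m), (w σ : ℂ) * ((starRingEnd ℂ) (a i) * b (σ i)) := by
            refine Finset.sum_congr rfl fun σ _ => ?_
            simp only [mul_ite, mul_one, mul_zero, ite_mul, zero_mul]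
            rw [Finset.sum_ite_eq Finset.univ (σ i)
              (fun j => (starRingEnd ℂ) (a i) * b j * (w σ : ℂ))]
            simp only [Finset.mem_univ, if_true]
            ring
    calc ∑ i, ∑ j, (starRingEnd ℂ) (a i) * b j * T i j
        = ∑ i, ∑ σ : Equiv.Perm (Fin m), (w σ : ℂ) * ((starRingEnd ℂ) (a i) * b (σ i)) :=
          Finset.sum_congr rfl fun i _ => step1 i
      _ = ∑ σ : Equiv.Perm (Fin m), ∑ i, (w σ : ℂ) * ((starRingEnd ℂ) (a i) * b (σ i)) :=
          Finset.sum_comm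
      _ = ∑ σ : Equiv.Perm (Fin m), (w σ : ℂ) * ∑ j, (starRingEnd ℂ) (a (σ⁻¹ j)) * b j := by
          refine Finset.sum_congr rfl fun σ _ => ?_
          rw [← Finset.mul_sum]
          congr 1
          rw [← Equiv.sum_comp σ (fun j => (starRingEnd ℂ) (a (σ⁻¹ j)) * b j)]
          simp
  -- final estimate
  rw [main]
  set S : Equiv.Perm (Fin m) → ℝ := fun π => ‖∑ i, (starRingEnd ℂ) (a (π i)) * b i‖
    with hSdef
  calc ‖∑ σ : Equiv.Perm (Fin m),
          (w σ : ℂ) * ∑ j, (starRingEnd ℂ) (a (σ⁻¹ j)) * b j‖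
      ≤ ∑ σ : Equiv.Perm (Fin m),
          ‖(w σ : ℂ) * ∑ j, (starRingEnd ℂ) (a (σ⁻¹ j)) * b j‖ :=
        norm_sum_le _ _
    _ = ∑ σ : Equiv.Perm (Fin m), w σ * S σ⁻¹ := by
        refine Finset.sum_congr rfl fun σ _ => ?_
        rw [norm_mul, Complex.norm_of_nonneg (hw0 σ)]
    _ ≤ ∑ σ : Equiv.Perm (Fin m), w σ * Finset.univ.sup' Finset.univ_nonempty S :=
        Finset.sum_le_sum fun σ _ => mul_le_mul_of_nonneg_left
          (Finset.le_sup' S (Finset.mem_univ σ⁻¹)) (hw0 σ)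
    _ = Finset.univ.sup' Finset.univ_nonempty S := by
        rw [← Finset.sum_mul, hw1, one_mul]
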